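/- For every R > 0: there exists λ* ∈ (0,1) such that the Nash effort matrix e*(z_NA(R)) equals the Pareto effort matrix a*(z_Pe(λ*), λ*) if and only if there exists λ* ∈ (0,1) satisfying the three conditions: (1 + R k12)/(1 + R(k12 + k11)) = (λ* z11_Pe + (1 − λ*) z12_Pe)/λ*, (1 + R k22)/(1 + R(k21 + k22)) = (λ* z21_Pe + (1 − λ*) z22_Pe)/λ*, and (1 + R k12)/(1 + R k11) = (1 + R k22)/(1 + R k21) = (1 − λ*)/λ*, where z_Pe is evaluated at λ*; in that case e*(z_NA(R)) = a*(z_Pe(λ*), λ*). -/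

import Mathlib

/-- The Pareto-optimal sensitivities `z_Pe(λ)`. -/
noncomputable def zPe (k11 k12 k21 k22 lam : ℝ) : Fin 2 → Fin 2 → ℝ :=
  ![![(1 - lam) ^ 2 * k12 / (lam ^ 2 * k11 + (1 - lam) ^ 2 * k12),
      lam ^ 2 * k11 / (lam ^ 2 * k11 + (1 - lam) ^ 2 * k12)],
    ![(1 - lam) ^ 2 * k22 / (lam ^ 2 * k21 + (1 - lam) ^ 2 * k22),
      lam ^ 2 * k21 / (lam ^ 2 * k21 + (1 - lam) ^ 2 * k22)]]

/-- The optimal sensitivities `z_NA(R)` in the no-Planner (Nash) model. -/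
noncomputable def zNA (k11 k12 k21 k22 R : ℝ) : Fin 2 → Fin 2 → ℝ :=
  ![![(1 + R * k12) / (1 + R * (k11 + k12)), (1 + R * k11) / (1 + R * (k11 + k12))],
    ![(1 + R * k22) / (1 + R * (k21 + k22)), (1 + R * k21) / (1 + R * (k21 + k22))]]

/-- The Pareto effort matrix `a*(z, λ)`. -/
noncomputable def aStar (k11 k12 k21 k22 lam : ℝ) (z : Fin 2 → Fin 2 → ℝ) : Fin 2 → Fin 2 → ℝ :=
  ![![(lam * z 0 0 + (1 - lam) * z 0 1) / (lam * k11),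
      -((lam * z 0 0 + (1 - lam) * z 0 1) / ((1 - lam) * k12))],
    ![-((lam * z 1 0 + (1 - lam) * z 1 1) / (lam * k21)),
      (lam * z 1 0 + (1 - lam) * z 1 1) / ((1 - lam) * k22)]]

/-- The Nash effort matrix `e*(z)`. -/
noncomputable def eStar (k11 k12 k21 k22 : ℝ) (z : Fin 2 → Fin 2 → ℝ) : Fin 2 → Fin 2 → ℝ :=
  ![![z 0 0 / k11, -(z 0 1 / k12)], ![-(z 1 0 / k21), z 1 1 / k22]]

private lemma nash_pareto_key (k11 k12 k21 k22 R lam : ℝ)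
    (hk11 : 0 < k11) (hk12 : 0 < k12) (hk21 : 0 < k21) (hk22 : 0 < k22)
    (hR : 0 < R) (h0 : 0 < lam) (h1 : lam < 1) (z : Fin 2 → Fin 2 → ℝ) :
    eStar k11 k12 k21 k22 (zNA k11 k12 k21 k22 R) = aStar k11 k12 k21 k22 lam z ↔
      ((1 + R * k12) / (1 + R * (k12 + k11)) = (lam * z 0 0 + (1 - lam) * z 0 1) / lam ∧
       (1 + R * k22) / (1 + R * (k21 + k22)) = (lam * z 1 0 + (1 - lam) * z 1 1) / lam ∧
       (1 + R * k12) / (1 + R * k11) = (1 - lam) / lam ∧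
       (1 + R * k22) / (1 + R * k21) = (1 - lam) / lam) := by
  have hl : (0:ℝ) < 1 - lam := by linarith
  have hB1 : (0:ℝ) < 1 + R * (k11 + k12) := by positivity
  have hB2 : (0:ℝ) < 1 + R * (k21 + k22) := by positivity
  have ha11 : (0:ℝ) < 1 + R * k11 := by positivity
  have ha12 : (0:ℝ) < 1 + R * k12 := by positivity
  have ha21 : (0:ℝ) < 1 + R * k21 := by positivity
  have ha22 : (0:ℝ) < 1 + R * k22 := by positivity
  rw [funext_iff]
  simp only [Fin.forall_fin_two, funext_iff]
  simp only [eStar, aStar, zNA, Matrix.cons_val', Matrix.cons_val_zero, Matrix.cons_val_one,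
    Matrix.head_cons, Matrix.empty_val', Matrix.cons_val_fin_one, Matrix.head_fin_const]
  have hk11' := hk11.ne'
  have hk12' := hk12.ne'
  have hk21' := hk21.ne'
  have hk22' := hk22.ne'
  have h0' := h0.ne'
  have hl' := hl.ne'
  have hB1' := hB1.ne'
  have hB2' := hB2.ne'
  have ha11' := ha11.ne'
  have ha12' := ha12.ne'
  have ha21' := ha21.ne'
  have ha22' := ha22.ne'
  set s := lam * z 0 0 + (1 - lam) * z 0 1 with hs
  set t := lam * z 1 0 + (1 - lam) * z 1 1 with ht
  constructor
  · rintro ⟨⟨e1, e2⟩, e3, e4⟩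
    rw [neg_inj] at e2 e3
    field_simp at e1 e2 e3 e4 ⊢
    refine ⟨by linear_combination e1,
      by linear_combination e3,
      by linear_combination e1 - e2,
      by linear_combination e3 - e4⟩
  · rintro ⟨c1, c2, c3, c4⟩
    field_simp at c1 c2 c3 c4 ⊢
    refine ⟨⟨by linear_combination c1, by linear_combination c3 - c1⟩,
      by linear_combination (-1 : ℝ) * c2, by linear_combination c2 - c4⟩


/-- for every `R > 0`, the Nash effort `e*(z_NA(R))` coincides with a Pareto
effort `a*(z_Pe(λ*), λ*)` for some `λ* ∈ (0,1)` iff there exists `λ* ∈ (0,1)` satisfying the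
three first-order conditions; in that case `e*(z_NA(R)) = a*(z_Pe(λ*), λ*)`. -/
theorem nash_is_pareto_iff (k11 k12 k21 k22 : ℝ)
    (hk11 : 0 < k11) (hk12 : 0 < k12) (hk21 : 0 < k21) (hk22 : 0 < k22)
    (R : ℝ) (hR : 0 < R) :
    ((∃ lam ∈ Set.Ioo (0 : ℝ) 1,
        eStar k11 k12 k21 k22 (zNA k11 k12 k21 k22 R)
          = aStar k11 k12 k21 k22 lam (zPe k11 k12 k21 k22 lam)) ↔
      (∃ lam ∈ Set.Ioo (0 : ℝ) 1,
        (1 + R * k12) / (1 + R * (k12 + k11))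
            = (lam * zPe k11 k12 k21 k22 lam 0 0 + (1 - lam) * zPe k11 k12 k21 k22 lam 0 1) / lam ∧
          (1 + R * k22) / (1 + R * (k21 + k22))
            = (lam * zPe k11 k12 k21 k22 lam 1 0 + (1 - lam) * zPe k11 k12 k21 k22 lam 1 1) / lam ∧
          (1 + R * k12) / (1 + R * k11) = (1 - lam) / lam ∧
          (1 + R * k22) / (1 + R * k21) = (1 - lam) / lam)) ∧
      ∀ lam ∈ Set.Ioo (0 : ℝ) 1,
        ((1 + R * k12) / (1 + R * (k12 + k11))
            = (lam * zPe k11 k12 k21 k22 lam 0 0 + (1 - lam) * zPe k11 k12 k21 k22 lam 0 1) / lam ∧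
          (1 + R * k22) / (1 + R * (k21 + k22))
            = (lam * zPe k11 k12 k21 k22 lam 1 0 + (1 - lam) * zPe k11 k12 k21 k22 lam 1 1) / lam ∧
          (1 + R * k12) / (1 + R * k11) = (1 - lam) / lam ∧
          (1 + R * k22) / (1 + R * k21) = (1 - lam) / lam) →
          eStar k11 k12 k21 k22 (zNA k11 k12 k21 k22 R)
            = aStar k11 k12 k21 k22 lam (zPe k11 k12 k21 k22 lam) := by
  constructor
  · exact exists_congr fun lam => and_congr_right fun hlam =>
      (nash_pareto_key k11 k12 k21 k22 R lam hk11 hk12 hk21 hk22 hR hlam.1 hlam.2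
        (zPe k11 k12 k21 k22 lam)).trans (by tauto)
  · intro lam hlam h
    exact (nash_pareto_key k11 k12 k21 k22 R lam hk11 hk12 hk21 hk22 hR hlam.1 hlam.2
      (zPe k11 k12 k21 k22 lam)).mpr (by tauto)
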